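/- Let τ be a real number with 2 < τ < 3 and let B > 0 and μ > 0. Then the function (t₁, t₂) ↦ (t₁ t₂)^{−τ} (1 − e^{−B t₁}) (1 − e^{−B t₂}) (1 − e^{−μ t₁ t₂}) is Lebesgue integrable on (0,∞) × (0,∞). -/
import Mathlib

open MeasureTheory Set

lemma one_sub_exp_neg_nonneg (x : ℝ) (hx : 0 ≤ x) : 0 ≤ 1 - Real.exp (-x) := by
  have : Real.exp (-x) ≤ 1 := Real.exp_le_one_iff.2 (by linarith)
  linarith

lemma one_sub_exp_neg_le (x : ℝ) : 1 - Real.exp (-x) ≤ x := by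
  have := Real.add_one_le_exp (-x)
  linarith

lemma one_sub_exp_neg_le_rpow (s x : ℝ) (hs0 : 0 < s) (hs1 : s ≤ 1) (hx : 0 ≤ x) :
    1 - Real.exp (-x) ≤ x ^ s := by
  rcases le_or_gt x 1 with h | h
  · rcases eq_or_lt_of_le hx with rfl | hx0
    · simp [Real.zero_rpow hs0.ne']
    · have h1 : 1 - Real.exp (-x) ≤ x := one_sub_exp_neg_le x
      have h2 : x ^ (1:ℝ) ≤ x ^ s := Real.rpow_le_rpow_of_exponent_ge hx0 h hs1
      rw [Real.rpow_one] at h2; linarith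
  · have h2 : 1 ≤ x ^ s := Real.one_le_rpow h.le hs0.le
    have := Real.exp_pos (-x); linarith

lemma aux_int (r B : ℝ) (hr1 : r < -1) (hr2 : -2 < r) (hB : 0 < B) :
    IntegrableOn (fun t : ℝ => t ^ r * (1 - Real.exp (-(B * t)))) (Set.Ioi 0) := by
  have hcont : ContinuousOn (fun t : ℝ => t ^ r * (1 - Real.exp (-(B * t)))) (Set.Ioi 0) := by
    apply ContinuousOn.mul
    · exact ContinuousOn.rpow_const continuousOn_id (fun x hx => Or.inl (ne_of_gt hx))
    · exact (continuous_const.sub ((continuous_const.mul continuous_id).neg.rexp)).continuousOn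
  have hsplit : Set.Ioi (0:ℝ) = Set.Ioc 0 1 ∪ Set.Ioi 1 :=
    (Set.Ioc_union_Ioi_eq_Ioi (by norm_num)).symm
  rw [hsplit]
  apply IntegrableOn.union
  · -- on Ioc 0 1, dominate by B * t^(r+1)
    have hmaj : IntegrableOn (fun t : ℝ => B * t ^ (r + 1)) (Set.Ioc 0 1) := by
      have h0 : IntervalIntegrable (fun x : ℝ => x ^ (r + 1)) volume 0 1 :=
        intervalIntegral.intervalIntegrable_rpow' (by linarith)
      rw [intervalIntegrable_iff_integrableOn_Ioc_of_le (by norm_num)] at h0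
      exact h0.const_mul B
    apply Integrable.mono' hmaj
    · exact (hcont.mono (Set.Ioc_subset_Ioi_self)).aestronglyMeasurable measurableSet_Ioc
    · filter_upwards [ae_restrict_mem measurableSet_Ioc] with t ht
      have ht0 : 0 < t := ht.1
      have h1 : 0 ≤ 1 - Real.exp (-(B * t)) :=
        one_sub_exp_neg_nonneg _ (by positivity)
      have h2 : 1 - Real.exp (-(B * t)) ≤ B * t := one_sub_exp_neg_le (B * t)
      rw [Real.norm_eq_abs, abs_of_nonneg (mul_nonneg (Real.rpow_nonneg ht0.le r) h1)]
      calc t ^ r * (1 - Real.exp (-(B * t))) ≤ t ^ r * (B * t) :=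
            mul_le_mul_of_nonneg_left h2 (Real.rpow_nonneg ht0.le r)
        _ = B * t ^ (r + 1) := by rw [Real.rpow_add_one (ne_of_gt ht0)]; ring
  · -- on Ioi 1, dominate by t^r
    have hmaj : IntegrableOn (fun t : ℝ => t ^ r) (Set.Ioi 1) :=
      integrableOn_Ioi_rpow_of_lt hr1 (by norm_num)
    apply Integrable.mono' hmaj
    · exact (hcont.mono (fun x hx => lt_trans (by norm_num) hx)).aestronglyMeasurable
        measurableSet_Ioi
    · filter_upwards [ae_restrict_mem measurableSet_Ioi] with t ht
      have ht0 : (0:ℝ) < t := lt_trans (by norm_num) ht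
      have h1 : 0 ≤ 1 - Real.exp (-(B * t)) :=
        one_sub_exp_neg_nonneg _ (by positivity)
      have h2 : 1 - Real.exp (-(B * t)) ≤ 1 := by
        have := Real.exp_pos (-(B * t)); linarith
      rw [Real.norm_eq_abs, abs_of_nonneg (mul_nonneg (Real.rpow_nonneg ht0.le r) h1)]
      calc t ^ r * (1 - Real.exp (-(B * t))) ≤ t ^ r * 1 :=
            mul_le_mul_of_nonneg_left h2 (Real.rpow_nonneg ht0.le r)
        _ = t ^ r := mul_one _

theorem stmt_8 (τ B μ : ℝ) (hτ2 : 2 < τ) (hτ3 : τ < 3) (hB : 0 < B) (hμ : 0 < μ) :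
    IntegrableOn
      (fun p : ℝ × ℝ => (p.1 * p.2) ^ (-τ) * (1 - Real.exp (-(B * p.1)))
        * (1 - Real.exp (-(B * p.2))) * (1 - Real.exp (-(μ * p.1 * p.2))))
      (Set.Ioi 0 ×ˢ Set.Ioi 0) := by
  set s : ℝ := (τ - 1) / 2 with hs
  have hs0 : 0 < s := by rw [hs]; linarith
  have hs1 : s ≤ 1 := by rw [hs]; linarith
  have hr1 : s - τ < -1 := by rw [hs]; linarith
  have hr2 : -2 < s - τ := by rw [hs]; linarith
  have hh : IntegrableOn (fun t : ℝ => t ^ (s - τ) * (1 - Real.exp (-(B * t)))) (Set.Ioi 0) :=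
    aux_int (s - τ) B hr1 hr2 hB
  have hmaj : IntegrableOn
      (fun p : ℝ × ℝ => μ ^ s * ((p.1 ^ (s - τ) * (1 - Real.exp (-(B * p.1)))) *
        (p.2 ^ (s - τ) * (1 - Real.exp (-(B * p.2)))))) (Set.Ioi 0 ×ˢ Set.Ioi 0) := by
    have := (hh.mul_prod hh).const_mul (μ ^ s)
    rw [IntegrableOn, Measure.volume_eq_prod, ← Measure.prod_restrict]
    exact this
  apply Integrable.mono' hmaj
  · apply ContinuousOn.aestronglyMeasurable _ (measurableSet_Ioi.prod measurableSet_Ioi)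
    apply ContinuousOn.mul
    apply ContinuousOn.mul
    apply ContinuousOn.mul
    · exact ContinuousOn.rpow_const (continuousOn_fst.mul continuousOn_snd)
        (fun p hp => Or.inl (ne_of_gt (mul_pos hp.1 hp.2)))
    · exact (continuous_const.sub ((continuous_const.mul continuous_fst).neg.rexp)).continuousOn
    · exact (continuous_const.sub ((continuous_const.mul continuous_snd).neg.rexp)).continuousOn
    · exact (continuous_const.sub
        (((continuous_const.mul continuous_fst).mul continuous_snd).neg.rexp)).continuousOn
  · filter_upwards [ae_restrict_mem (measurableSet_Ioi.prod measurableSet_Ioi)] with p hp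
    obtain ⟨h1, h2⟩ := hp
    have ht1 : (0:ℝ) < p.1 := h1
    have ht2 : (0:ℝ) < p.2 := h2
    have ha : 0 ≤ 1 - Real.exp (-(B * p.1)) := one_sub_exp_neg_nonneg _ (by positivity)
    have hb : 0 ≤ 1 - Real.exp (-(B * p.2)) := one_sub_exp_neg_nonneg _ (by positivity)
    have hc : 0 ≤ 1 - Real.exp (-(μ * p.1 * p.2)) := one_sub_exp_neg_nonneg _ (by positivity)
    have hcb : 1 - Real.exp (-(μ * p.1 * p.2)) ≤ (μ * p.1 * p.2) ^ s :=
      one_sub_exp_neg_le_rpow s _ hs0 hs1 (by positivity)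
    have hpw : 0 ≤ (p.1 * p.2) ^ (-τ) := Real.rpow_nonneg (by positivity) _
    rw [Real.norm_eq_abs, abs_of_nonneg (by positivity)]
    have e1 : (p.1 * p.2) ^ (-τ) = p.1 ^ (-τ) * p.2 ^ (-τ) := Real.mul_rpow ht1.le ht2.le
    have e2 : (μ * p.1 * p.2) ^ s = μ ^ s * p.1 ^ s * p.2 ^ s := by
      rw [Real.mul_rpow (by positivity) ht2.le, Real.mul_rpow hμ.le ht1.le]
    have e3 : p.1 ^ (s - τ) = p.1 ^ s * p.1 ^ (-τ) := by
      rw [← Real.rpow_add ht1, sub_eq_add_neg]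
    have e4 : p.2 ^ (s - τ) = p.2 ^ s * p.2 ^ (-τ) := by
      rw [← Real.rpow_add ht2, sub_eq_add_neg]
    calc (p.1 * p.2) ^ (-τ) * (1 - Real.exp (-(B * p.1))) * (1 - Real.exp (-(B * p.2)))
          * (1 - Real.exp (-(μ * p.1 * p.2)))
        ≤ (p.1 * p.2) ^ (-τ) * (1 - Real.exp (-(B * p.1))) * (1 - Real.exp (-(B * p.2)))
          * ((μ * p.1 * p.2) ^ s) :=
          mul_le_mul_of_nonneg_left hcb (by positivity)
      _ = μ ^ s * ((p.1 ^ (s - τ) * (1 - Real.exp (-(B * p.1)))) *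
          (p.2 ^ (s - τ) * (1 - Real.exp (-(B * p.2))))) := by
          rw [e1, e2, e3, e4]; ring
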